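/- Three-term recurrence for i=1: for odd m and odd n ≥ m+4, -((n-m)/2 - 1)((n+m)/2 - 1)((n-3)/2) n c_{n-4,m,1} - (((n+m)/2)((n-m)/2) - n/2)(n-1) c_{n-2,m,1} + ((n+m)/2)((n-m)/2)(n/2 - 1)(n+1) c_{n,m,1} = 0. -/

import Mathlib

noncomputable def c (n m i : ℕ) : ℝ :=
  (-1 : ℝ) ^ ((n - m) / 2) *
    ∑ s ∈ Finset.Icc ((i - m) / 2) ((n - m) / 2),
      (-1 : ℝ) ^ s * (((n + m) / 2 + s).choose ((n - m) / 2 - s) : ℝ) *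
        ((m + 2 * s).choose s : ℝ) * (2 : ℝ) ^ ((1 : ℤ) - m - 2 * s) *
        ((m + 2 * s).choose ((m + 2 * s - i) / 2) : ℝ)

namespace CoeffRec

/-- The part of the summand independent of `n`. -/
noncomputable def Aa (a s : ℕ) : ℝ :=
  ((2*a+1+2*s).choose s : ℝ) * ((2*a+1+2*s).choose (a+s) : ℝ) / 2^(2*a+2*s)

/-- The sum `S_j = ∑ (-1)^s C(2a+1+j+s, j-s) A(s)`, with `c (2a+1+2j) (2a+1) 1 = (-1)^j S_j`. -/
noncomputable def Ssum (a j : ℕ) : ℝ :=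
  ∑ s ∈ Finset.range (j+1), (-1:ℝ)^s * ((2*a+1+j+s).choose (j-s) : ℝ) * Aa a s

lemma choose_shift (q r : ℕ) : ((q+1).choose (r+1) : ℝ) * (r+1) = (q.choose r : ℝ) * (q+1) := by
  have h := Nat.add_one_mul_choose_eq q r
  have : ((q + 1).choose (r + 1) * (r + 1) : ℝ) = ((q+1) * q.choose r : ℝ) := by
    exact_mod_cast congrArg (fun x : ℕ => (x:ℝ)) h.symm
  linarith [this]

lemma choose_right (q r d : ℕ) (h : q = r + d) :
    (q.choose (r+1) : ℝ) * (r+1) = (q.choose r : ℝ) * d := by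
  have h2 := Nat.choose_succ_right_eq q r
  have h3 : q - r = d := by omega
  rw [h3] at h2
  exact_mod_cast congrArg (fun x : ℕ => (x:ℝ)) h2

/-- Ratio of consecutive `Aa`'s. -/
lemma Aa_ratio (a s : ℕ) :
    Aa a (s+1) * (((s:ℝ)+1) * (2*(a:ℝ)+s+2) * (2*(a:ℝ)+2*s+4)) =
      Aa a s * ((2*(a:ℝ)+2*s+2) * (2*(a:ℝ)+2*s+3)^2) := by
  rw [Aa, Aa]
  rw [show 2*a+1+2*(s+1) = 2*a+1+2*s+2 by ring, show 2*a+2*(s+1) = 2*a+2*s+2 by ring,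
      show a+(s+1) = a+s+1 by ring]
  rw [Nat.cast_choose ℝ (show s+1 ≤ 2*a+1+2*s+2 by omega),
      Nat.cast_choose ℝ (show a+s+1 ≤ 2*a+1+2*s+2 by omega),
      Nat.cast_choose ℝ (show s ≤ 2*a+1+2*s by omega),
      Nat.cast_choose ℝ (show a+s ≤ 2*a+1+2*s by omega)]
  rw [show 2*a+1+2*s+2 - (s+1) = 2*a+s+2 by omega,
      show 2*a+1+2*s+2 - (a+s+1) = a+s+2 by omega,
      show 2*a+1+2*s - s = 2*a+s+1 by omega,
      show 2*a+1+2*s - (a+s) = a+s+1 by omega]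
  have hf : ∀ x : ℕ, ((Nat.factorial (x+1) : ℕ) : ℝ) = ((x:ℝ)+1) * (Nat.factorial x : ℝ) := by
    intro x; rw [Nat.factorial_succ]; push_cast; ring
  rw [show 2*a+1+2*s+2 = (2*a+1+2*s)+1+1 by ring,
      show (2*a+s+2) = (2*a+s+1)+1 by ring,
      show (a+s+2) = (a+s+1)+1 by ring]
  rw [hf ((2*a+1+2*s)+1), hf (2*a+1+2*s), hf (2*a+s+1), hf (a+s+1), hf (a+s), hf s]
  rw [pow_add]
  push_cast
  field_simp
  ring

/-- The Gosper certificate. -/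
noncomputable def g (a k : ℕ) (s : ℕ) : ℝ :=
  if s ≤ k+2 then
    (-1:ℝ)^s * Aa a s * ((2*a+1+k+s).choose (k+2-s) : ℝ) *
      (-(2*(a:ℝ)+2*k+5) * (2*(a:ℝ)+2*k+4) * (2*(a:ℝ)+2*k+3) / 2 *
        ((s:ℝ) * (2*(s:ℝ)+2*a+2) * ((s:ℝ)+2*a+1)) / ((2*(s:ℝ)+2*a) * (2*(s:ℝ)+2*a+1)))
  else 0

/-- coefficient shorthands -/
noncomputable def C4 (a k : ℕ) : ℝ := ((k:ℝ)+1) * (2*(a:ℝ)+k+2) * ((a:ℝ)+k+1) * (2*(a:ℝ)+2*k+5)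
noncomputable def C2 (a k : ℕ) : ℝ :=
  ((2*(a:ℝ)+k+3) * ((k:ℝ)+2) - (2*(a:ℝ)+2*k+5)/2) * (2*(a:ℝ)+2*k+4)
noncomputable def C0 (a k : ℕ) : ℝ := (2*(a:ℝ)+k+3) * ((k:ℝ)+2) * (2*(a:ℝ)+2*k+3) * ((a:ℝ)+k+3)

/-- per-s guarded summand -/
noncomputable def Tg (a j K s : ℕ) : ℝ :=
  if s ≤ j then (-1:ℝ)^s * ((2*a+1+j+s).choose (j-s) : ℝ) * Aa a s else 0

set_option maxHeartbeats 4000000 in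
lemma key_generic (a k s : ℕ) (hs : s ≤ k) (hpos : 1 ≤ a + s) :
    -C4 a k * Tg a k k s + C2 a k * Tg a (k+1) k s + C0 a k * Tg a (k+2) k s =
      g a k (s+1) - g a k s := by
  obtain ⟨u, hu⟩ : ∃ u, k = s + u := ⟨k - s, by omega⟩
  subst hu
  rw [Tg, if_pos (by omega), Tg, if_pos (by omega), Tg, if_pos (by omega),
      g, if_pos (by omega), g, if_pos (by omega)]
  rw [show 2*a+1+(s+u)+s = 2*a+2*s+u+1 by ring,
      show 2*a+1+(s+u+1)+s = 2*a+2*s+u+2 by ring,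
      show 2*a+1+(s+u+2)+s = 2*a+2*s+u+3 by ring,
      show 2*a+1+(s+u)+(s+1) = 2*a+2*s+u+2 by ring,
      show s+u-s = u by omega, show s+u+1-s = u+1 by omega, show s+u+2-s = u+2 by omega,
      show s+u+2-(s+1) = u+1 by omega]
  have h1 : ((2*a+2*s+u+2).choose (u+1) : ℝ) =
      ((2*a+2*s+u+1).choose u : ℝ) * (2*(a:ℝ)+2*s+u+2) / ((u:ℝ)+1) := by
    rw [eq_div_iff (by positivity)]
    have h := choose_shift (2*a+2*s+u+1) u
    rw [show 2*a+2*s+u+1+1 = 2*a+2*s+u+2 by ring] at h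
    push_cast at h ⊢; linarith
  have h2 : ((2*a+2*s+u+3).choose (u+2) : ℝ) =
      ((2*a+2*s+u+1).choose u : ℝ) * ((2*(a:ℝ)+2*s+u+2)*(2*(a:ℝ)+2*s+u+3)) /
        (((u:ℝ)+1)*((u:ℝ)+2)) := by
    rw [eq_div_iff (by positivity)]
    have ha := choose_shift (2*a+2*s+u+2) (u+1)
    have hb := choose_shift (2*a+2*s+u+1) u
    rw [show 2*a+2*s+u+2+1 = 2*a+2*s+u+3 by ring] at ha
    rw [show 2*a+2*s+u+1+1 = 2*a+2*s+u+2 by ring] at hb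
    push_cast at ha hb ⊢
    nlinarith [ha, hb]
  have h3 : ((2*a+2*s+u+1).choose (u+2) : ℝ) = ((2*a+2*s+u+1).choose u : ℝ) *
      ((2*(a:ℝ)+2*s+1)*(2*(a:ℝ)+2*s)) / (((u:ℝ)+1)*((u:ℝ)+2)) := by
    rw [eq_div_iff (by positivity)]
    have ha := choose_right (2*a+2*s+u+1) u (2*a+2*s+1) (by omega)
    have hb := choose_right (2*a+2*s+u+1) (u+1) (2*a+2*s) (by omega)
    push_cast at ha hb ⊢
    nlinarith [ha, hb]
  have hr := Aa_ratio a s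
  have e2 : Aa a (s+1) = Aa a s * ((2*(a:ℝ)+2*s+2) * (2*(a:ℝ)+2*s+3)^2) /
      (((s:ℝ)+1) * (2*(a:ℝ)+s+2) * (2*(a:ℝ)+2*s+4)) := by
    rw [eq_div_iff (by positivity)]; linarith [hr]
  rw [h1, h2, h3, e2, C4, C2, C0]
  have d1 : (2*(s:ℝ)+2*a) ≠ 0 := by
    have : (1:ℝ) ≤ (a:ℝ) + s := by exact_mod_cast hpos
    nlinarith
  have d2 : (2*(s:ℝ)+2*a+1) ≠ 0 := by positivity
  have d3 : (2*((s:ℝ)+1)+2*a) ≠ 0 := by positivity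
  have d4 : (2*((s:ℝ)+1)+2*a+1) ≠ 0 := by positivity
  have d5 : ((s:ℝ)+a) ≠ 0 := by
    have : (1:ℝ) ≤ (a:ℝ) + s := by exact_mod_cast hpos
    nlinarith
  push_cast
  field_simp
  ring

lemma key_zero (k : ℕ) :
    -C4 0 k * Tg 0 k k 0 + C2 0 k * Tg 0 (k+1) k 0 + C0 0 k * Tg 0 (k+2) k 0 =
      g 0 k 1 - g 0 k 0 := by
  have hg0 : g 0 k 0 = 0 := by simp [g]
  rw [hg0, Tg, if_pos (by omega), Tg, if_pos (by omega), Tg, if_pos (by omega),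
      g, if_pos (by omega)]
  rw [show 2*0+1+k+0 = k+1 by ring, show 2*0+1+(k+1)+0 = k+2 by ring,
      show 2*0+1+(k+2)+0 = k+3 by ring, show 2*0+1+k+1 = k+2 by ring,
      show k-0 = k by omega, show k+1-0 = k+1 by omega, show k+2-0 = k+2 by omega,
      show k+2-1 = k+1 by omega, show (k+2 : ℕ) = (k+1)+1 by ring,
      show (k+3 : ℕ) = ((k+1)+1)+1 by ring]
  rw [Nat.choose_succ_self_right, Nat.choose_succ_self_right, Nat.choose_succ_self_right]
  have hA0 : Aa 0 0 = 1 := by norm_num [Aa]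
  have hA1 : Aa 0 1 = 9/4 := by norm_num [Aa]
  rw [hA0, hA1, C4, C2, C0]
  push_cast
  norm_num
  ring

lemma key_k1 (a k : ℕ) :
    -C4 a k * Tg a k k (k+1) + C2 a k * Tg a (k+1) k (k+1) + C0 a k * Tg a (k+2) k (k+1) =
      g a k (k+2) - g a k (k+1) := by
  rw [Tg, if_neg (by omega), Tg, if_pos (le_refl _), Tg, if_pos (by omega),
      g, if_pos (le_refl _), g, if_pos (by omega)]
  rw [show k+1-(k+1) = 0 by omega, show k+2-(k+1) = 1 by omega,
      show k+2-(k+2) = 0 by omega,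
      show 2*a+1+(k+1)+(k+1) = 2*a+2*k+3 by ring,
      show 2*a+1+(k+2)+(k+1) = (2*a+2*k+3)+1 by ring,
      show 2*a+1+k+(k+1) = 2*a+2*k+2 by ring,
      show 2*a+1+k+(k+2) = 2*a+2*k+3 by ring]
  simp only [Nat.choose_zero_right, Nat.choose_one_right]
  have hr := Aa_ratio a (k+1)
  rw [show k+1+1 = k+2 by omega] at hr
  push_cast at hr
  have hD : ((k:ℝ)+2) * (2*(a:ℝ)+k+3) * (2*(a:ℝ)+2*k+6) ≠ 0 := by positivity
  have e2 : Aa a (k+2) = Aa a (k+1) * ((2*(a:ℝ)+2*k+4) * (2*(a:ℝ)+2*k+5)^2) /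
      (((k:ℝ)+2) * (2*(a:ℝ)+k+3) * (2*(a:ℝ)+2*k+6)) := by
    rw [eq_div_iff hD]
    nlinarith [hr]
  rw [e2, C4, C2, C0]
  have h1 : (2*((k:ℝ)+1)+2*a) ≠ 0 := by positivity
  have h2 : (2*((k:ℝ)+1)+2*a+1) ≠ 0 := by positivity
  have h3 : (2*((k:ℝ)+2)+2*a) ≠ 0 := by positivity
  have h4 : (2*((k:ℝ)+2)+2*a+1) ≠ 0 := by positivity
  push_cast
  field_simp
  ring

lemma key_k2 (a k : ℕ) :
    -C4 a k * Tg a k k (k+2) + C2 a k * Tg a (k+1) k (k+2) + C0 a k * Tg a (k+2) k (k+2) =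
      g a k (k+3) - g a k (k+2) := by
  rw [Tg, if_neg (by omega), Tg, if_neg (by omega), Tg, if_pos (le_refl _),
      g, if_neg (by omega), g, if_pos (le_refl _)]
  rw [show k+2-(k+2) = 0 by omega, show 2*a+1+k+(k+2) = 2*a+2*k+3 by ring,
      show 2*a+1+(k+2)+(k+2) = 2*a+2*k+5 by ring]
  rw [Nat.choose_zero_right, Nat.choose_zero_right, C0]
  have h1 : (2*((k:ℝ)+2)+2*a) ≠ 0 := by positivity
  have h2 : (2*((k:ℝ)+2)+2*a+1) ≠ 0 := by positivity
  push_cast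
  field_simp
  ring

lemma Ssum_ext (a k j : ℕ) (hj : j ≤ k+2) :
    Ssum a j = ∑ s ∈ Finset.range (k+3), Tg a j k s := by
  rw [Ssum, ← Finset.sum_subset (Finset.range_subset_range.mpr (by omega : j+1 ≤ k+3))]
  · exact Finset.sum_congr rfl fun s hs => by
      rw [Tg, if_pos (by simpa [Nat.lt_succ_iff] using hs)]
  · intro s _ hs
    rw [Tg, if_neg (by simp [Nat.lt_succ_iff] at hs; omega)]

lemma master (a k : ℕ) :
    -C4 a k * Ssum a k + C2 a k * Ssum a (k+1) + C0 a k * Ssum a (k+2) = 0 := by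
  rw [Ssum_ext a k k (by omega), Ssum_ext a k (k+1) (by omega), Ssum_ext a k (k+2) (by omega),
    Finset.mul_sum, Finset.mul_sum, Finset.mul_sum, ← Finset.sum_add_distrib,
    ← Finset.sum_add_distrib]
  have key : ∀ s ∈ Finset.range (k+3),
      -C4 a k * Tg a k k s + C2 a k * Tg a (k+1) k s + C0 a k * Tg a (k+2) k s =
        g a k (s+1) - g a k s := by
    intro s hs
    simp only [Finset.mem_range] at hs
    rcases Nat.lt_or_ge s (k+1) with h | h
    · rcases Nat.eq_zero_or_pos (a + s) with h0 | h0
      · have ha : a = 0 := by omega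
        have hs0 : s = 0 := by omega
        subst ha; subst hs0
        have := key_zero k
        linarith [this]
      · have := key_generic a k s (by omega) (by omega)
        linarith [this]
    · rcases Nat.eq_or_lt_of_le h with h1 | h1
      · subst h1
        have := key_k1 a k; linarith [this]
      · have h2 : s = k+2 := by omega
        subst h2
        have := key_k2 a k; linarith [this]
  rw [Finset.sum_congr rfl key, Finset.sum_range_sub]
  have g0 : g a k 0 = 0 := by simp [g]
  have gk3 : g a k (k+3) = 0 := by rw [g, if_neg (by omega)]
  rw [g0, gk3, sub_zero]

lemma c_eq (a j : ℕ) : c (2*a+1+2*j) (2*a+1) 1 = (-1:ℝ)^j * Ssum a j := by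
  rw [c, show (2*a+1+2*j - (2*a+1))/2 = j by omega, show (1 - (2*a+1))/2 = 0 by omega,
      show (2*a+1+2*j + (2*a+1))/2 = 2*a+1+j by omega,
      show Finset.Icc 0 j = Finset.range (j+1) by ext x; simp [Nat.lt_succ_iff], Ssum]
  congr 1
  refine Finset.sum_congr rfl fun s _ => ?_
  rw [show (2*a+1 + 2*s - 1)/2 = a+s by omega]
  have he : (1:ℤ) - ((2*a+1:ℕ):ℤ) - 2*(s:ℤ) = -((2*a+2*s : ℕ) : ℤ) := by push_cast; ring
  rw [he, zpow_neg, zpow_natCast, Aa]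
  ring

end CoeffRec

/-- Three-term recurrence for i = 1:
-((n-m)/2 - 1)((n+m)/2 - 1)((n-3)/2) n c_{n-4,m,1}
- (((n+m)/2)((n-m)/2) - n/2)(n-1) c_{n-2,m,1}
+ ((n+m)/2)((n-m)/2)(n/2 - 1)(n+1) c_{n,m,1} = 0. -/
theorem coeff_three_term_recurrence (n m : ℕ) (hm : Odd m) (hn : Odd n) (hmn : m + 4 ≤ n) :
    -((((n : ℝ) - m) / 2 - 1) * (((n : ℝ) + m) / 2 - 1) * (((n : ℝ) - 3) / 2) * n) *
        c (n - 4) m 1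
      - ((((n : ℝ) + m) / 2 * (((n : ℝ) - m) / 2) - (n : ℝ) / 2) * ((n : ℝ) - 1)) *
        c (n - 2) m 1
      + (((n : ℝ) + m) / 2 * (((n : ℝ) - m) / 2) * ((n : ℝ) / 2 - 1) * ((n : ℝ) + 1)) *
        c n m 1 = 0 := by
  obtain ⟨a, ha⟩ := hm
  obtain ⟨b, hb⟩ := hn
  obtain ⟨k, hk⟩ : ∃ k, n = 2*a+1+2*(k+2) := ⟨b - a - 2, by omega⟩
  subst ha hk
  rw [show 2*a+1+2*(k+2) - 4 = 2*a+1+2*k by omega,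
      show 2*a+1+2*(k+2) - 2 = 2*a+1+2*(k+1) by omega,
      CoeffRec.c_eq a k, CoeffRec.c_eq a (k+1), CoeffRec.c_eq a (k+2)]
  have h := CoeffRec.master a k
  rw [CoeffRec.C4, CoeffRec.C2, CoeffRec.C0] at h
  push_cast
  linear_combination ((-1:ℝ)^k) * h
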